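/- Let L ∈ ℕ, κ ≥ 1, and C_x > 0. There exists a constant C > 0, depending only on L, κ, and C_x, with the following property. Let q₀, …, q_L ⊂ ℝ × ℝ^d be time-space cylinders q_ℓ = I_ℓ × D_ℓ, where each I_ℓ is a bounded interval and each D_ℓ ⊂ ℝ^d is a bounded measurable set of positive measure, such that for every j ∈ {1,…,L}: |q_j| ≤ κ · |q_j ∩ ⋃_{ℓ<j} q_ℓ| and |q_j ∩ ⋃_{ℓ<j} q_ℓ| > 0. Set q := ⋃_{ℓ=0}^{L} q_ℓ, let h_t be the diameter of the projection of q onto the time axis and h_x the diameter of the projection of q onto ℝ^d. Let v, g ∈ L²(q) be such that for each ℓ and almost every t ∈ I_ℓ: ‖v(t,·) − ⟨v(t,·)⟩_{D_ℓ}‖_{L²(D_ℓ)} ≤ C_x diam(D_ℓ) ‖g(t,·)‖_{L²(D_ℓ)}. Then ‖v − ⟨v⟩_q‖²_{L²(q)} ≤ C ( h_x² ‖g‖²_{L²(q)} + h_t |v|²_{H^{1/2}L²(q)} ). -/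

import Mathlib

open MeasureTheory Set ENNReal

/-- The localized parabolic seminorm
`|v|²_{H^{1/2}L²(q)} = ∫_ℝ ∫_ℝ ∫_{ℝ^d} 1_q(t,x) 1_q(s,x)
  |v(t,x) − v(s,x)|² |t−s|⁻² dx ds dt`. -/
noncomputable def parSemi {d : ℕ} (q : Set (ℝ × (Fin d → ℝ)))
    (v : ℝ → (Fin d → ℝ) → ℝ) : ℝ≥0∞ :=
  ∫⁻ t : ℝ, ∫⁻ s : ℝ, ∫⁻ x : Fin d → ℝ,
    q.indicator (fun _ => (1 : ℝ≥0∞)) (t, x) *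
      q.indicator (fun _ => (1 : ℝ≥0∞)) (s, x) *
        ENNReal.ofReal ((v t x - v s x) ^ 2 / |t - s| ^ 2)

/-- The mean `⟨v⟩_q` of `v` over `q ⊆ ℝ × ℝ^d`. -/
noncomputable def parMean {d : ℕ} (q : Set (ℝ × (Fin d → ℝ)))
    (v : ℝ → (Fin d → ℝ) → ℝ) : ℝ :=
  (volume q).toReal⁻¹ * ∫ p in q, v p.1 p.2


section aux
variable {α : Type*} [MeasurableSpace α] {μ : Measure α} [IsFiniteMeasure μ]

lemma exp_sq (f : α → ℝ) (hf : Integrable f μ) (hf2 : Integrable (fun a => f a ^ 2) μ)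
    (c : ℝ) :
    ∫ a, (f a - c) ^ 2 ∂μ
      = (∫ a, f a ^ 2 ∂μ) - 2 * c * (∫ a, f a ∂μ) + (μ univ).toReal * c ^ 2 := by
  have h1 : ∀ a, (f a - c) ^ 2 = f a ^ 2 - 2 * c * f a + c ^ 2 := by intro a; ring
  have e1 : Integrable (fun a => f a ^ 2 - 2 * c * f a) μ := by
    exact hf2.sub (hf.const_mul _)
  have e2 : Integrable (fun a => 2 * c * f a) μ := hf.const_mul _
  simp only [h1]
  rw [integral_add e1 (integrable_const _), integral_sub hf2 e2, integral_const_mul,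
    integral_const, measureReal_def]
  simp [smul_eq_mul, mul_comm]

lemma sq_nonneg_integral (f : α → ℝ) (hf : Integrable f μ) (hf2 : Integrable (fun a => f a ^ 2) μ)
    (h0 : (μ univ).toReal ≠ 0) :
    (μ univ).toReal * ((μ univ).toReal⁻¹ * ∫ a, f a ∂μ) ^ 2 ≤ ∫ a, f a ^ 2 ∂μ := by
  set M := (μ univ).toReal with hM
  set m := M⁻¹ * ∫ a, f a ∂μ with hm
  have hint : ∫ a, f a ∂μ = M * m := by rw [hm, ← mul_assoc, mul_inv_cancel₀ h0, one_mul]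
  have h := integral_nonneg (μ := μ) (f := fun a => (f a - m)^2) (fun a => sq_nonneg _)
  rw [exp_sq f hf hf2 m, hint, ← hM] at h
  nlinarith [h]

lemma mean_min (f : α → ℝ) (hf : Integrable f μ) (hf2 : Integrable (fun a => f a ^ 2) μ)
    (h0 : (μ univ).toReal ≠ 0) (c : ℝ) :
    ∫ a, (f a - (μ univ).toReal⁻¹ * ∫ a, f a ∂μ) ^ 2 ∂μ ≤ ∫ a, (f a - c) ^ 2 ∂μ := by
  set M := (μ univ).toReal with hM
  set m := M⁻¹ * ∫ a, f a ∂μ with hm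
  have hint : ∫ a, f a ∂μ = M * m := by rw [hm, ← mul_assoc, mul_inv_cancel₀ h0, one_mul]
  rw [exp_sq f hf hf2 c, exp_sq f hf hf2 m, hint, ← hM]
  have hMpos : 0 ≤ M := ENNReal.toReal_nonneg
  nlinarith [sq_nonneg (c - m)]

lemma sq_mean_le (f : α → ℝ) (hf : Integrable f μ) (hf2 : Integrable (fun a => f a ^ 2) μ)
    (h0 : (μ univ).toReal ≠ 0) :
    ((μ univ).toReal⁻¹ * ∫ a, f a ∂μ) ^ 2 ≤ (μ univ).toReal⁻¹ * ∫ a, f a ^ 2 ∂μ := by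
  have h := sq_nonneg_integral f hf hf2 h0
  set M := (μ univ).toReal with hM
  set m := M⁻¹ * ∫ a, f a ∂μ with hm
  have hMpos : 0 < M := lt_of_le_of_ne ENNReal.toReal_nonneg (Ne.symm h0)
  calc m ^ 2 = M⁻¹ * (M * m ^ 2) := by field_simp
  _ ≤ M⁻¹ * ∫ a, f a ^ 2 ∂μ := mul_le_mul_of_nonneg_left h (by positivity)

lemma var_le_double (f : α → ℝ) (hf : Integrable f μ) (hf2 : Integrable (fun a => f a ^ 2) μ)
    (h0 : (μ univ).toReal ≠ 0) :
    (μ univ).toReal * ∫ a, (f a - (μ univ).toReal⁻¹ * ∫ a, f a ∂μ) ^ 2 ∂μ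
      ≤ ∫ s, ∫ t, (f t - f s) ^ 2 ∂μ ∂μ := by
  have hsq := sq_nonneg_integral f hf hf2 h0
  set M := (μ univ).toReal with hM
  set m := M⁻¹ * ∫ a, f a ∂μ with hm
  have hMpos : 0 < M := lt_of_le_of_ne ENNReal.toReal_nonneg (Ne.symm h0)
  have hint : ∫ a, f a ∂μ = M * m := by rw [hm, ← mul_assoc, mul_inv_cancel₀ h0, one_mul]
  have key : ∀ s : α, ∫ t, (f t - f s) ^ 2 ∂μ
      = (∫ a, f a ^ 2 ∂μ) - 2 * (M * m) * f s + M * f s ^ 2 := by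
    intro s; rw [exp_sq f hf hf2 (f s), hint, ← hM]; ring
  have e1 : Integrable (fun s => (∫ a, f a ^ 2 ∂μ) - 2 * (M * m) * f s) μ := by
    exact (integrable_const _).sub (hf.const_mul _)
  have e2 : Integrable (fun s => M * f s ^ 2) μ := hf2.const_mul _
  have h1 : ∫ s, ∫ t, (f t - f s) ^ 2 ∂μ ∂μ
      = M * (∫ a, f a ^ 2 ∂μ) - 2 * (M * m) * (M * m) + M * ∫ a, f a ^ 2 ∂μ := by
    simp only [key]
    rw [integral_add e1 e2, integral_sub (integrable_const _) (hf.const_mul _),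
      integral_const, measureReal_def, integral_const_mul, integral_const_mul, hint]
    simp only [smul_eq_mul, ← hM]
    try ring
  rw [h1, exp_sq f hf hf2 m, hint, ← hM]
  nlinarith [mul_le_mul_of_nonneg_left hsq hMpos.le]
end aux

section chain
variable {α : Type*} [MeasurableSpace α] {μ : Measure α}

lemma integrableOn_sub_sq {f : α → ℝ} {X : Set α} (hf : IntegrableOn f X μ)
    (hf2 : IntegrableOn (fun a => f a ^ 2) X μ) (hX : μ X ≠ ∞) (c : ℝ) :
    IntegrableOn (fun a => (f a - c) ^ 2) X μ := by
  have : (fun a => (f a - c) ^ 2) = fun a => f a ^ 2 - 2 * c * f a + c ^ 2 := by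
    funext a; ring
  rw [this]
  haveI : IsFiniteMeasure (μ.restrict X) :=
    ⟨by rw [Measure.restrict_apply_univ]; exact hX.lt_top⟩
  exact ((hf2.sub (hf.const_mul _)).add (integrable_const _))

lemma setIntegral_union_le {f : α → ℝ} {S T : Set α} (hS : MeasurableSet S)
    (hT : MeasurableSet T) (hf : IntegrableOn f (S ∪ T) μ) (hnn : ∀ a, 0 ≤ f a) :
    ∫ a in S ∪ T, f a ∂μ ≤ (∫ a in S, f a ∂μ) + ∫ a in T, f a ∂μ := by
  have hST : S ∪ T = S ∪ (T \ S) := by rw [union_diff_self]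
  rw [hST, setIntegral_union (disjoint_sdiff_right) (hT.diff hS)
    (hf.mono_set (by rw [hST]; exact subset_union_left))
    (hf.mono_set (by rw [hST]; exact subset_union_right))]
  exact add_le_add le_rfl (setIntegral_mono_set (hf.mono_set subset_union_right)
    (Filter.Eventually.of_forall hnn) (HasSubset.Subset.eventuallyLE diff_subset))

/-- mean over a subset, as used everywhere below -/
noncomputable def smean (μ : Measure α) (f : α → ℝ) (X : Set α) : ℝ :=
  (μ X).toReal⁻¹ * ∫ a in X, f a ∂μ

lemma smean_sub_const {f : α → ℝ} {X : Set α} (hf : IntegrableOn f X μ)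
    (hX : μ X ≠ ∞) (hX0 : μ X ≠ 0) (c : ℝ) :
    smean μ f X - c = (μ X).toReal⁻¹ * ∫ a in X, (f a - c) ∂μ := by
  haveI : IsFiniteMeasure (μ.restrict X) :=
    ⟨by rw [Measure.restrict_apply_univ]; exact hX.lt_top⟩
  have hXr : (μ X).toReal ≠ 0 := ENNReal.toReal_ne_zero.2 ⟨hX0, hX⟩
  rw [integral_sub hf (integrable_const _), integral_const, measureReal_def, Measure.restrict_apply_univ,
    smul_eq_mul, mul_sub, smean]
  field_simp

/-- Jensen: squared deviation of the mean bounded by mean squared deviation. -/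
lemma sq_smean_sub_le {f : α → ℝ} {X : Set α} (hX : MeasurableSet X)
    (hf : IntegrableOn f X μ) (hf2 : IntegrableOn (fun a => f a ^ 2) X μ)
    (hXfin : μ X ≠ ∞) (hX0 : μ X ≠ 0) (c : ℝ) :
    (smean μ f X - c) ^ 2 ≤ (μ X).toReal⁻¹ * ∫ a in X, (f a - c) ^ 2 ∂μ := by
  haveI : IsFiniteMeasure (μ.restrict X) :=
    ⟨by rw [Measure.restrict_apply_univ]; exact hXfin.lt_top⟩
  have hXr : (μ X).toReal ≠ 0 := ENNReal.toReal_ne_zero.2 ⟨hX0, hXfin⟩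
  rw [smean_sub_const hf hXfin hX0 c]
  have := sq_mean_le (μ := μ.restrict X) (fun a => f a - c)
    (hf.sub (integrable_const _)) (integrableOn_sub_sq hf hf2 hXfin c)
    (by rwa [Measure.restrict_apply_univ])
  rwa [Measure.restrict_apply_univ] at this

lemma smean_min {f : α → ℝ} {X : Set α} (hf : IntegrableOn f X μ)
    (hf2 : IntegrableOn (fun a => f a ^ 2) X μ)
    (hXfin : μ X ≠ ∞) (hX0 : μ X ≠ 0) (c : ℝ) :
    ∫ a in X, (f a - smean μ f X) ^ 2 ∂μ ≤ ∫ a in X, (f a - c) ^ 2 ∂μ := by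
  haveI : IsFiniteMeasure (μ.restrict X) :=
    ⟨by rw [Measure.restrict_apply_univ]; exact hXfin.lt_top⟩
  have := mean_min (μ := μ.restrict X) f hf hf2
    (by rw [Measure.restrict_apply_univ]; exact ENNReal.toReal_ne_zero.2 ⟨hX0, hXfin⟩) c
  rwa [Measure.restrict_apply_univ] at this

lemma chain_step {f : α → ℝ} {S T : Set α} {κ : ℝ} (hκ1 : 1 ≤ κ)
    (hS : MeasurableSet S) (hT : MeasurableSet T)
    (hSfin : μ S ≠ ∞) (hTfin : μ T ≠ ∞) (hS0 : μ S ≠ 0)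
    (hP0 : μ (T ∩ S) ≠ 0) (hκ : μ T ≤ ENNReal.ofReal κ * μ (T ∩ S))
    (hf : IntegrableOn f (S ∪ T) μ) (hf2 : IntegrableOn (fun a => f a ^ 2) (S ∪ T) μ) :
    ∫ a in S ∪ T, (f a - smean μ f (S ∪ T)) ^ 2 ∂μ
      ≤ (1 + 4 * κ) * (∫ a in S, (f a - smean μ f S) ^ 2 ∂μ)
        + (2 + 4 * κ) * ∫ a in T, (f a - smean μ f T) ^ 2 ∂μ := by
  set P := T ∩ S with hPdef
  have hPS : P ⊆ S := inter_subset_right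
  have hPT : P ⊆ T := inter_subset_left
  have hPfin : μ P ≠ ∞ := fun h => hTfin (top_unique (h ▸ measure_mono hPT))
  have hT0 : μ T ≠ 0 := fun h => hP0 (le_antisymm (h ▸ measure_mono hPT) (zero_le))
  have hUfin : μ (S ∪ T) ≠ ∞ := by
    refine fun h => hSfin ?_
    have := (measure_union_le (μ := μ) S T)
    rw [h] at this
    rcases ENNReal.add_eq_top.1 (top_unique this) with h1 | h1
    · exact h1
    · exact absurd h1 hTfin
  have hU0 : μ (S ∪ T) ≠ 0 := fun h =>
    hS0 (le_antisymm (h ▸ measure_mono subset_union_left) (zero_le))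
  haveI : IsFiniteMeasure (μ.restrict T) :=
    ⟨by rw [Measure.restrict_apply_univ]; exact hTfin.lt_top⟩
  haveI : IsFiniteMeasure (μ.restrict S) :=
    ⟨by rw [Measure.restrict_apply_univ]; exact hSfin.lt_top⟩
  have hfS : IntegrableOn f S μ := hf.mono_set subset_union_left
  have hfT : IntegrableOn f T μ := hf.mono_set subset_union_right
  have hf2S : IntegrableOn (fun a => f a ^ 2) S μ := hf2.mono_set subset_union_left
  have hf2T : IntegrableOn (fun a => f a ^ 2) T μ := hf2.mono_set subset_union_right
  have hfP : IntegrableOn f P μ := hfT.mono_set hPT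
  have hf2P : IntegrableOn (fun a => f a ^ 2) P μ := hf2T.mono_set hPT
  set mS := smean μ f S
  set mT := smean μ f T
  set mP := smean μ f P
  have hES : 0 ≤ ∫ a in S, (f a - mS) ^ 2 ∂μ := integral_nonneg fun a => sq_nonneg _
  have hET : 0 ≤ ∫ a in T, (f a - mT) ^ 2 ∂μ := integral_nonneg fun a => sq_nonneg _
  -- step 1
  have h1 : ∫ a in S ∪ T, (f a - smean μ f (S ∪ T)) ^ 2 ∂μ
      ≤ ∫ a in S ∪ T, (f a - mS) ^ 2 ∂μ := smean_min hf hf2 hUfin hU0 mS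
  have h2 : ∫ a in S ∪ T, (f a - mS) ^ 2 ∂μ
      ≤ (∫ a in S, (f a - mS) ^ 2 ∂μ) + ∫ a in T, (f a - mS) ^ 2 ∂μ :=
    setIntegral_union_le hS hT (integrableOn_sub_sq hf hf2 hUfin mS) fun a => sq_nonneg _
  -- step 2 : on T
  have h3 : ∫ a in T, (f a - mS) ^ 2 ∂μ
      ≤ 2 * (∫ a in T, (f a - mT) ^ 2 ∂μ) + (μ T).toReal * (2 * (mT - mS) ^ 2) := by
    have hpt : ∀ a, (f a - mS) ^ 2 ≤ 2 * (f a - mT) ^ 2 + 2 * (mT - mS) ^ 2 := by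
      intro a; nlinarith [sq_nonneg ((f a - mT) - (mT - mS))]
    calc ∫ a in T, (f a - mS) ^ 2 ∂μ
        ≤ ∫ a in T, (2 * (f a - mT) ^ 2 + 2 * (mT - mS) ^ 2) ∂μ := by
          refine integral_mono_of_nonneg (Filter.Eventually.of_forall fun a => sq_nonneg _)
            (((integrableOn_sub_sq hfT hf2T hTfin mT).const_mul 2).add
              (integrable_const _)) (Filter.Eventually.of_forall hpt)
      _ = 2 * (∫ a in T, (f a - mT) ^ 2 ∂μ) + (μ T).toReal * (2 * (mT - mS) ^ 2) := by
          rw [integral_add ((integrableOn_sub_sq hfT hf2T hTfin mT).const_mul 2)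
            (integrable_const _), integral_const_mul, integral_const, measureReal_def,
            Measure.restrict_apply_univ, smul_eq_mul]
  -- mean comparisons
  have h5 : (mT - mP) ^ 2 ≤ (μ P).toReal⁻¹ * ∫ a in T, (f a - mT) ^ 2 ∂μ := by
    have := sq_smean_sub_le (hT.inter hS) hfP hf2P hPfin hP0 mT
    have hmono : ∫ a in P, (f a - mT) ^ 2 ∂μ ≤ ∫ a in T, (f a - mT) ^ 2 ∂μ :=
      setIntegral_mono_set (integrableOn_sub_sq hfT hf2T hTfin mT)
        (Filter.Eventually.of_forall fun a => sq_nonneg _) (HasSubset.Subset.eventuallyLE hPT)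
    calc (mT - mP) ^ 2 = (mP - mT) ^ 2 := by ring
      _ ≤ (μ P).toReal⁻¹ * ∫ a in P, (f a - mT) ^ 2 ∂μ := this
      _ ≤ (μ P).toReal⁻¹ * ∫ a in T, (f a - mT) ^ 2 ∂μ := by
          exact mul_le_mul_of_nonneg_left hmono (by positivity)
  have h6 : (mP - mS) ^ 2 ≤ (μ P).toReal⁻¹ * ∫ a in S, (f a - mS) ^ 2 ∂μ := by
    have := sq_smean_sub_le (hT.inter hS) hfP hf2P hPfin hP0 mS
    have hmono : ∫ a in P, (f a - mS) ^ 2 ∂μ ≤ ∫ a in S, (f a - mS) ^ 2 ∂μ :=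
      setIntegral_mono_set (integrableOn_sub_sq hfS hf2S hSfin mS)
        (Filter.Eventually.of_forall fun a => sq_nonneg _) (HasSubset.Subset.eventuallyLE hPS)
    calc (mP - mS) ^ 2
        ≤ (μ P).toReal⁻¹ * ∫ a in P, (f a - mS) ^ 2 ∂μ := this
      _ ≤ (μ P).toReal⁻¹ * ∫ a in S, (f a - mS) ^ 2 ∂μ := by
          exact mul_le_mul_of_nonneg_left hmono (by positivity)
  have h4 : (mT - mS) ^ 2 ≤ 2 * (mT - mP) ^ 2 + 2 * (mP - mS) ^ 2 := by
    nlinarith [sq_nonneg ((mT - mP) - (mP - mS))]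
  -- measure ratio
  have hPr : 0 < (μ P).toReal :=
    lt_of_le_of_ne ENNReal.toReal_nonneg
      (Ne.symm (ENNReal.toReal_ne_zero.2 ⟨hP0, hPfin⟩))
  have h7 : (μ T).toReal ≤ κ * (μ P).toReal := by
    have := ENNReal.toReal_mono (by
      exact ENNReal.mul_ne_top ENNReal.ofReal_ne_top hPfin) hκ
    rwa [ENNReal.toReal_mul, ENNReal.toReal_ofReal (by linarith)] at this
  have hr : (μ T).toReal * (μ P).toReal⁻¹ ≤ κ := by
    rw [← div_eq_mul_inv]
    exact (div_le_iff₀ hPr).2 (by linarith)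
  have hr0 : 0 ≤ (μ T).toReal := ENNReal.toReal_nonneg
  -- combine
  have hcomb : (μ T).toReal * (2 * (mT - mS) ^ 2)
      ≤ 4 * κ * (∫ a in S, (f a - mS) ^ 2 ∂μ) + 4 * κ * ∫ a in T, (f a - mT) ^ 2 ∂μ := by
    have e5 : (μ T).toReal * (mT - mP) ^ 2 ≤ κ * ∫ a in T, (f a - mT) ^ 2 ∂μ := by
      calc (μ T).toReal * (mT - mP) ^ 2
          ≤ (μ T).toReal * ((μ P).toReal⁻¹ * ∫ a in T, (f a - mT) ^ 2 ∂μ) :=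
            mul_le_mul_of_nonneg_left h5 hr0
        _ = ((μ T).toReal * (μ P).toReal⁻¹) * ∫ a in T, (f a - mT) ^ 2 ∂μ := by ring
        _ ≤ κ * ∫ a in T, (f a - mT) ^ 2 ∂μ := mul_le_mul_of_nonneg_right hr hET
    have e6 : (μ T).toReal * (mP - mS) ^ 2 ≤ κ * ∫ a in S, (f a - mS) ^ 2 ∂μ := by
      calc (μ T).toReal * (mP - mS) ^ 2
          ≤ (μ T).toReal * ((μ P).toReal⁻¹ * ∫ a in S, (f a - mS) ^ 2 ∂μ) :=
            mul_le_mul_of_nonneg_left h6 hr0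
        _ = ((μ T).toReal * (μ P).toReal⁻¹) * ∫ a in S, (f a - mS) ^ 2 ∂μ := by ring
        _ ≤ κ * ∫ a in S, (f a - mS) ^ 2 ∂μ := mul_le_mul_of_nonneg_right hr hES
    nlinarith [mul_le_mul_of_nonneg_left h4 hr0]
  have h1S' : ∫ a in S, (f a - mS) ^ 2 ∂μ ≤ ∫ a in S, (f a - mS) ^ 2 ∂μ := le_refl _
  linarith [h1, h2, h3, hcomb,
    smean_min hfS hf2S hSfin hS0 mS]
end chain
section helpers
variable {α : Type*} [MeasurableSpace α] {μ : Measure α}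

lemma ofReal_integral_le (f : α → ℝ) (hf : 0 ≤ᵐ[μ] f) :
    ENNReal.ofReal (∫ a, f a ∂μ) ≤ ∫⁻ a, ENNReal.ofReal (f a) ∂μ := by
  by_cases hi : Integrable f μ
  · exact le_of_eq (ofReal_integral_eq_lintegral_ofReal hi hf)
  · rw [integral_undef hi]; simp
end helpers

section percyl
variable {d : ℕ}

lemma le_parSemi {q : Set (ℝ × (Fin d → ℝ))} {A : Set ℝ} (hA : MeasurableSet A)
    {Dl : Set (Fin d → ℝ)} (hD : MeasurableSet Dl) (hsub : A ×ˢ Dl ⊆ q)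
    (v : ℝ → (Fin d → ℝ) → ℝ) :
    (∫⁻ t in A, ∫⁻ s in A, ∫⁻ x in Dl,
      ENNReal.ofReal ((v t x - v s x) ^ 2 / |t - s| ^ 2)) ≤ parSemi q v := by
  unfold parSemi
  rw [← lintegral_indicator hA]
  refine lintegral_mono fun t => ?_
  rcases Classical.em (t ∈ A) with ht | ht
  · rw [indicator_of_mem ht, ← lintegral_indicator hA]
    refine lintegral_mono fun s => ?_
    rcases Classical.em (s ∈ A) with hs | hs
    · rw [indicator_of_mem hs, ← lintegral_indicator hD]
      refine lintegral_mono fun x => ?_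
      rcases Classical.em (x ∈ Dl) with hx | hx
      · rw [indicator_of_mem hx, indicator_of_mem (hsub (mk_mem_prod ht hx)),
          indicator_of_mem (hsub (mk_mem_prod hs hx)), one_mul, one_mul]
      · rw [indicator_of_notMem hx]; exact zero_le
    · rw [indicator_of_notMem hs]; exact zero_le
  · rw [indicator_of_notMem ht]; exact zero_le

set_option maxHeartbeats 1000000 in
lemma percyl {q : Set (ℝ × (Fin d → ℝ))}
    {A : Set ℝ} (hA : MeasurableSet A) {Dl : Set (Fin d → ℝ)} (hD : MeasurableSet Dl)
    (hsub : A ×ˢ Dl ⊆ q)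
    (hAfin : volume A ≠ ∞) (hA0 : volume A ≠ 0)
    (hDfin : volume Dl ≠ ∞) (hD0 : volume Dl ≠ 0)
    (hAord : A.OrdConnected)
    {δ Kd : ℝ} (hδ0 : 0 ≤ δ) (hδ : ∀ t ∈ A, ∀ s ∈ A, |t - s| ≤ δ) (hKd : 0 ≤ Kd)
    {v g : ℝ → (Fin d → ℝ) → ℝ}
    (hv : MemLp (fun p : ℝ × (Fin d → ℝ) => v p.1 p.2) 2 (volume.restrict q))
    (hPoin : ∀ᵐ t ∂(volume.restrict A),
      (∫ x in Dl, (v t x - (volume Dl).toReal⁻¹ * ∫ y in Dl, v t y) ^ 2)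
        ≤ Kd * ∫ x in Dl, g t x ^ 2)
    (hg2int : IntegrableOn (fun p : ℝ × (Fin d → ℝ) => g p.1 p.2 ^ 2) q volume) :
    ENNReal.ofReal (∫ p in (A ×ˢ Dl),
        (v p.1 p.2 - smean volume (fun p : ℝ × (Fin d → ℝ) => v p.1 p.2) (A ×ˢ Dl)) ^ 2)
      ≤ ENNReal.ofReal (2 * Kd) * (∫⁻ p in q, ENNReal.ofReal (g p.1 p.2 ^ 2))
        + ENNReal.ofReal (2 * δ) * parSemi q v := by
  classical
  set f : ℝ × (Fin d → ℝ) → ℝ := fun p => v p.1 p.2 with hfdef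
  set μt := volume.restrict A with hμt
  set μx := volume.restrict Dl with hμx
  have hprod : volume.restrict (A ×ˢ Dl) = μt.prod μx := by
    rw [hμt, hμx, Measure.prod_restrict, ← Measure.volume_eq_prod]
  have hMD : (volume Dl).toReal ≠ 0 := ENNReal.toReal_ne_zero.2 ⟨hD0, hDfin⟩
  have hMA : (volume A).toReal ≠ 0 := ENNReal.toReal_ne_zero.2 ⟨hA0, hAfin⟩
  have hMDpos : 0 < (volume Dl).toReal := lt_of_le_of_ne toReal_nonneg (Ne.symm hMD)
  have hMApos : 0 < (volume A).toReal := lt_of_le_of_ne toReal_nonneg (Ne.symm hMA)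
  have hADvol : volume (A ×ˢ Dl) = volume A * volume Dl := by
    rw [Measure.volume_eq_prod, Measure.prod_prod]
  have hADfin : volume (A ×ˢ Dl) ≠ ∞ := by
    rw [hADvol]; exact ENNReal.mul_ne_top hAfin hDfin
  have hAD0 : volume (A ×ˢ Dl) ≠ 0 := by
    rw [hADvol]; exact mul_ne_zero hA0 hD0
  haveI : IsFiniteMeasure μt := ⟨by rw [hμt, Measure.restrict_apply_univ]; exact hAfin.lt_top⟩
  haveI : IsFiniteMeasure μx := ⟨by rw [hμx, Measure.restrict_apply_univ]; exact hDfin.lt_top⟩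
  haveI : IsFiniteMeasure (volume.restrict (A ×ˢ Dl)) :=
    ⟨by rw [Measure.restrict_apply_univ]; exact hADfin.lt_top⟩
  have hvq : MemLp f 2 (volume.restrict (A ×ˢ Dl)) :=
    hv.mono_measure (Measure.restrict_mono hsub le_rfl)
  have hfint : IntegrableOn f (A ×ˢ Dl) volume := hvq.integrable one_le_two
  have hf2int : IntegrableOn (fun p => f p ^ 2) (A ×ˢ Dl) volume := hvq.integrable_sq
  have hfintp : Integrable f (μt.prod μx) := by rwa [← hprod]
  have hf2intp : Integrable (fun p => f p ^ 2) (μt.prod μx) := by rwa [← hprod]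
  -- the spatial means
  set w : ℝ → ℝ := fun t => (volume Dl).toReal⁻¹ * ∫ x in Dl, v t x with hwdef
  have hw_aesm : AEStronglyMeasurable w μt := by
    have h1 : AEStronglyMeasurable f (μt.prod μx) := by
      rw [← hprod]; exact hvq.aestronglyMeasurable
    exact (h1.integral_prod_right').const_mul _
  -- slicewise integrability
  have hslice : ∀ᵐ t ∂μt, Integrable (fun x => v t x) μx :=
    hfintp.prod_right_ae
  have hslice2 : ∀ᵐ t ∂μt, Integrable (fun x => v t x ^ 2) μx :=
    hf2intp.prod_right_ae
  -- w is square integrable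
  have hwsq_bound : ∀ᵐ t ∂μt, w t ^ 2 ≤ (volume Dl).toReal⁻¹ * ∫ x in Dl, v t x ^ 2 := by
    filter_upwards [hslice, hslice2] with t h1 h2
    have := sq_mean_le (μ := μx) (fun x => v t x) h1 h2
      (by rw [hμx, Measure.restrict_apply_univ]; exact hMD)
    rw [hμx, Measure.restrict_apply_univ] at this
    simpa [hwdef, hμx] using this
  have hw_sq_aesm : AEStronglyMeasurable (fun t => w t ^ 2) μt :=
    (continuous_pow 2).comp_aestronglyMeasurable hw_aesm
  have hw2int : Integrable (fun t => w t ^ 2) μt := by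
    have hb : Integrable (fun t => (volume Dl).toReal⁻¹ * ∫ x in Dl, v t x ^ 2) μt := by
      have := hf2intp.integral_prod_left
      simpa [hμx] using this.const_mul (volume Dl).toReal⁻¹
    refine Integrable.mono' hb hw_sq_aesm ?_
    filter_upwards [hwsq_bound] with t ht
    rw [Real.norm_eq_abs, abs_of_nonneg (sq_nonneg _)]; exact ht
  have hwint : Integrable w μt := by
    refine Integrable.mono' ((integrable_const 1).add hw2int) hw_aesm ?_
    filter_upwards with t
    simp only [Pi.add_apply]
    rw [Real.norm_eq_abs]
    nlinarith [sq_nonneg (|w t| - 1), abs_nonneg (w t), sq_abs (w t)]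
  -- the time mean of w
  set mw : ℝ := (volume A).toReal⁻¹ * ∫ t, w t ∂μt with hmwdef
  -- MemLp of (t,x) ↦ w t on the product
  have hwfst : MemLp (fun p : ℝ × (Fin d → ℝ) => w p.1) 2 (volume.restrict (A ×ˢ Dl)) := by
    rw [hprod]
    have hmap : Measure.map Prod.fst (μt.prod μx) = (μx univ) • μt := Measure.map_fst_prod
    have h1 : MemLp w 2 ((μx univ) • μt) := by
      refine (memLp_two_iff_integrable_sq ?_).2 ?_
      · exact hw_aesm.smul_measure _
      · exact hw2int.smul_measure (by rw [hμx, Measure.restrict_apply_univ]; exact hDfin)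
    have h2 : MemLp w 2 (Measure.map Prod.fst (μt.prod μx)) := by rwa [hmap]
    exact (memLp_map_measure_iff h2.aestronglyMeasurable
      measurable_fst.aemeasurable).1 h2
  have hsubm : Integrable (fun p : ℝ × (Fin d → ℝ) => (f p - w p.1) ^ 2)
      (volume.restrict (A ×ˢ Dl)) := (hvq.sub hwfst).integrable_sq
  have hsubm2 : Integrable (fun p : ℝ × (Fin d → ℝ) => (w p.1 - mw) ^ 2)
      (volume.restrict (A ×ˢ Dl)) := (hwfst.sub (memLp_const mw)).integrable_sq
  -- Step 1 : replace the mean by mw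
  have hstep1 : ∫ p in A ×ˢ Dl,
        (f p - smean volume (fun p : ℝ × (Fin d → ℝ) => v p.1 p.2) (A ×ˢ Dl)) ^ 2
      ≤ ∫ p in A ×ˢ Dl, (f p - mw) ^ 2 :=
    smean_min hfint hf2int hADfin hAD0 mw
  -- Step 2 : split
  set T1 : ℝ := ∫ p in A ×ˢ Dl, (f p - w p.1) ^ 2 with hT1def
  set T2 : ℝ := ∫ p in A ×ˢ Dl, (w p.1 - mw) ^ 2 with hT2def
  have hT1nn : 0 ≤ T1 := integral_nonneg fun p => sq_nonneg _
  have hT2nn : 0 ≤ T2 := integral_nonneg fun p => sq_nonneg _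
  have hstep2 : ∫ p in A ×ˢ Dl, (f p - mw) ^ 2 ≤ 2 * T1 + 2 * T2 := by
    have hint : Integrable
        (fun p : ℝ × (Fin d → ℝ) => 2 * (f p - w p.1) ^ 2 + 2 * (w p.1 - mw) ^ 2)
        (volume.restrict (A ×ˢ Dl)) := (hsubm.const_mul 2).add (hsubm2.const_mul 2)
    calc ∫ p in A ×ˢ Dl, (f p - mw) ^ 2
        ≤ ∫ p in A ×ˢ Dl, (2 * (f p - w p.1) ^ 2 + 2 * (w p.1 - mw) ^ 2) := by
          refine integral_mono_of_nonneg
            (Filter.Eventually.of_forall fun p => sq_nonneg _) hint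
            (Filter.Eventually.of_forall fun p => by
              show (f p - mw) ^ 2 ≤ 2 * (f p - w p.1) ^ 2 + 2 * (w p.1 - mw) ^ 2
              nlinarith [sq_nonneg ((f p - w p.1) - (w p.1 - mw))])
      _ = 2 * T1 + 2 * T2 := by
          rw [integral_add (hsubm.const_mul 2) (hsubm2.const_mul 2),
            integral_const_mul, integral_const_mul]
  -- Term 1 : the spatial Poincaré inequality
  have hgprod : Integrable (fun p : ℝ × (Fin d → ℝ) => g p.1 p.2 ^ 2) (μt.prod μx) := by
    rw [← hprod]; exact hg2int.mono_set hsub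
  have hT1bound : T1 ≤ Kd * ∫ p in A ×ˢ Dl, g p.1 p.2 ^ 2 := by
    have e1 : T1 = ∫ t, (∫ x, (v t x - w t) ^ 2 ∂μx) ∂μt := by
      rw [hT1def, hprod, integral_prod _ (by rwa [← hprod] : Integrable _ (μt.prod μx))]
    have e2 : ∫ p in A ×ˢ Dl, g p.1 p.2 ^ 2 = ∫ t, (∫ x, g t x ^ 2 ∂μx) ∂μt := by
      rw [hprod, integral_prod _ hgprod]
    rw [e1, e2, ← integral_const_mul]
    refine integral_mono_of_nonneg
      (Filter.Eventually.of_forall fun t => integral_nonneg fun x => sq_nonneg _)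
      ((hgprod.integral_prod_left).const_mul Kd) ?_
    exact hPoin
  have hg_lint : ENNReal.ofReal (∫ p in A ×ˢ Dl, g p.1 p.2 ^ 2)
      ≤ ∫⁻ p in q, ENNReal.ofReal (g p.1 p.2 ^ 2) := by
    refine le_trans (ofReal_integral_le _ (Filter.Eventually.of_forall fun p => sq_nonneg _)) ?_
    exact lintegral_mono' (Measure.restrict_mono hsub le_rfl) le_rfl
  -- Term 2
  have hT2eq : T2 = (volume Dl).toReal * ∫ t, (w t - mw) ^ 2 ∂μt := by
    rw [hT2def, hprod, integral_prod _ (by rwa [← hprod] : Integrable _ (μt.prod μx))]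
    simp only [integral_const, measureReal_def, hμx, Measure.restrict_apply_univ, smul_eq_mul]
    rw [integral_const_mul]
  have hvar : ∫ t, (w t - mw) ^ 2 ∂μt
      ≤ (volume A).toReal⁻¹ * ∫ s, ∫ t, (w t - w s) ^ 2 ∂μt ∂μt := by
    have h := var_le_double (μ := μt) w hwint hw2int
      (by rw [hμt, Measure.restrict_apply_univ]; exact hMA)
    rw [hμt, Measure.restrict_apply_univ] at h
    rw [← hmwdef] at h
    rw [inv_mul_eq_div, le_div_iff₀ hMApos]
    linarith [h, mul_comm (volume A).toReal (∫ t, (w t - mw) ^ 2 ∂μt)]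
  -- double integral to lintegral
  have hdl : ENNReal.ofReal (∫ s, ∫ t, (w t - w s) ^ 2 ∂μt ∂μt)
      ≤ ∫⁻ s, ∫⁻ t, ENNReal.ofReal ((w t - w s) ^ 2) ∂μt ∂μt := by
    refine le_trans (ofReal_integral_le _
      (Filter.Eventually.of_forall fun s => integral_nonneg fun t => sq_nonneg _)) ?_
    exact lintegral_mono fun s =>
      ofReal_integral_le _ (Filter.Eventually.of_forall fun t => sq_nonneg _)
  -- Jensen in space, a.e.
  have hjen : ∫⁻ s, ∫⁻ t, ENNReal.ofReal ((w t - w s) ^ 2) ∂μt ∂μt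
      ≤ ∫⁻ s, ∫⁻ t, ENNReal.ofReal
          ((volume Dl).toReal⁻¹ * ∫ x, (v t x - v s x) ^ 2 ∂μx) ∂μt ∂μt := by
    refine lintegral_mono_ae ?_
    filter_upwards [hslice, hslice2] with s hs1 hs2
    refine lintegral_mono_ae ?_
    filter_upwards [hslice, hslice2] with t ht1 ht2
    refine ENNReal.ofReal_le_ofReal ?_
    have hsub_int : Integrable (fun x => v t x - v s x) μx := ht1.sub hs1
    have hsub_sq : Integrable (fun x => (v t x - v s x) ^ 2) μx := by
      refine Integrable.mono' ((ht2.const_mul 2).add (hs2.const_mul 2))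
        ((continuous_pow 2).comp_aestronglyMeasurable
          (ht1.aestronglyMeasurable.sub hs1.aestronglyMeasurable)) ?_
      filter_upwards with x
      simp only [Pi.add_apply]
      rw [Real.norm_eq_abs, abs_of_nonneg (sq_nonneg _)]
      nlinarith [sq_nonneg (v t x + v s x)]
    have hwt : w t - w s = (volume Dl).toReal⁻¹ * ∫ x, (v t x - v s x) ∂μx := by
      rw [integral_sub ht1 hs1, hwdef]; simp only [hμx]; ring
    have := sq_mean_le (μ := μx) (fun x => v t x - v s x) hsub_int hsub_sq
      (by rw [hμx, Measure.restrict_apply_univ]; exact hMD)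
    rw [hμx, Measure.restrict_apply_univ] at this
    rw [hwt]
    simpa [hμx] using this
  -- pull out the constant and go to the triple lintegral
  set J0 : ℝ≥0∞ := ∫⁻ s, ∫⁻ t, ∫⁻ x, ENNReal.ofReal ((v t x - v s x) ^ 2) ∂μx ∂μt ∂μt
    with hJ0def
  have hconst : ∫⁻ s, ∫⁻ t, ENNReal.ofReal
        ((volume Dl).toReal⁻¹ * ∫ x, (v t x - v s x) ^ 2 ∂μx) ∂μt ∂μt
      ≤ ENNReal.ofReal ((volume Dl).toReal⁻¹) * J0 := by
    have step : ∀ s t : ℝ, ENNReal.ofReal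
        ((volume Dl).toReal⁻¹ * ∫ x, (v t x - v s x) ^ 2 ∂μx)
        ≤ ENNReal.ofReal ((volume Dl).toReal⁻¹) *
          ∫⁻ x, ENNReal.ofReal ((v t x - v s x) ^ 2) ∂μx := by
      intro s t
      rw [ENNReal.ofReal_mul (by positivity)]
      exact mul_le_mul_right (ofReal_integral_le _
        (Filter.Eventually.of_forall fun x => sq_nonneg _)) _
    calc ∫⁻ s, ∫⁻ t, ENNReal.ofReal
          ((volume Dl).toReal⁻¹ * ∫ x, (v t x - v s x) ^ 2 ∂μx) ∂μt ∂μt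
        ≤ ∫⁻ s, ∫⁻ t, ENNReal.ofReal ((volume Dl).toReal⁻¹) *
            ∫⁻ x, ENNReal.ofReal ((v t x - v s x) ^ 2) ∂μx ∂μt ∂μt :=
          lintegral_mono fun s => lintegral_mono fun t => step s t
      _ = ENNReal.ofReal ((volume Dl).toReal⁻¹) * J0 := by
          rw [hJ0def, ← lintegral_const_mul' _ _ ENNReal.ofReal_ne_top]
          exact lintegral_congr fun s => lintegral_const_mul' _ _ ENNReal.ofReal_ne_top
  -- kernel bound
  set J1 : ℝ≥0∞ := ∫⁻ t in A, ∫⁻ s in A, ∫⁻ x in Dl,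
      ENNReal.ofReal ((v t x - v s x) ^ 2 / |t - s| ^ 2) with hJ1def
  have habsA : ∀ t ∈ A, ∀ s ∈ A, |t - s| ≤ (volume A).toReal := by
    intro t ht s hs
    have h1 : uIcc t s ⊆ A := hAord.uIcc_subset ht hs
    have h2 : volume (uIcc t s) ≤ volume A := measure_mono h1
    have h3 : volume (uIcc t s) = ENNReal.ofReal (|t - s|) := by
      rw [uIcc, Real.volume_Icc]
      congr 1
      rw [max_sub_min_eq_abs, abs_sub_comm]
    rw [h3] at h2
    have := ENNReal.toReal_mono hAfin h2
    rwa [ENNReal.toReal_ofReal (abs_nonneg _)] at this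
  have hker : J0 ≤ ENNReal.ofReal (δ * (volume A).toReal) * J1 := by
    have key : ∀ t ∈ A, ∀ s ∈ A, ∀ x : Fin d → ℝ,
        (v t x - v s x) ^ 2
          ≤ (δ * (volume A).toReal) * ((v t x - v s x) ^ 2 / |t - s| ^ 2) := by
      intro t ht s hs x
      rcases eq_or_ne t s with rfl | hts
      · simp
      · have habs : (0:ℝ) < |t - s| := abs_pos.2 (sub_ne_zero.2 hts)
        have h2 : |t - s| ^ 2 ≤ δ * (volume A).toReal := by
          have := hδ t ht s hs
          have := habsA t ht s hs
          nlinarith [abs_nonneg (t - s)]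
        have h3 : (v t x - v s x) ^ 2
            = ((v t x - v s x) ^ 2 / |t - s| ^ 2) * |t - s| ^ 2 :=
          (div_mul_cancel₀ _ (pow_ne_zero 2 habs.ne')).symm
        calc (v t x - v s x) ^ 2
            = ((v t x - v s x) ^ 2 / |t - s| ^ 2) * |t - s| ^ 2 := h3
          _ ≤ ((v t x - v s x) ^ 2 / |t - s| ^ 2) * (δ * (volume A).toReal) :=
              mul_le_mul_of_nonneg_left h2 (by positivity)
          _ = (δ * (volume A).toReal) * ((v t x - v s x) ^ 2 / |t - s| ^ 2) := by ring
    rw [hJ0def, hJ1def]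
    calc ∫⁻ s, ∫⁻ t, ∫⁻ x, ENNReal.ofReal ((v t x - v s x) ^ 2) ∂μx ∂μt ∂μt
        ≤ ∫⁻ s, ∫⁻ t, ∫⁻ x, ENNReal.ofReal (δ * (volume A).toReal) *
            ENNReal.ofReal ((v t x - v s x) ^ 2 / |t - s| ^ 2) ∂μx ∂μt ∂μt := by
          rw [hμt]
          refine lintegral_mono_ae ?_
          filter_upwards [ae_restrict_mem hA] with s hsA
          refine lintegral_mono_ae ?_
          filter_upwards [ae_restrict_mem hA] with t htA
          refine lintegral_mono fun x => ?_
          rw [← ENNReal.ofReal_mul (by positivity)]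
          exact ENNReal.ofReal_le_ofReal (key t htA s hsA x)
      _ = ENNReal.ofReal (δ * (volume A).toReal) * ∫⁻ s, ∫⁻ t, ∫⁻ x,
            ENNReal.ofReal ((v t x - v s x) ^ 2 / |t - s| ^ 2) ∂μx ∂μt ∂μt := by
          rw [← lintegral_const_mul' _ _ ENNReal.ofReal_ne_top]
          refine lintegral_congr fun s => ?_
          rw [← lintegral_const_mul' _ _ ENNReal.ofReal_ne_top]
          refine lintegral_congr fun t => ?_
          rw [← lintegral_const_mul' _ _ ENNReal.ofReal_ne_top]
      _ = ENNReal.ofReal (δ * (volume A).toReal) * ∫⁻ t in A, ∫⁻ s in A, ∫⁻ x in Dl,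
            ENNReal.ofReal ((v t x - v s x) ^ 2 / |t - s| ^ 2) := by
          congr 1
          rw [hμt, hμx]
          refine lintegral_congr fun a => lintegral_congr fun b => lintegral_congr fun x => ?_
          have h1 : (v b x - v a x) ^ 2 = (v a x - v b x) ^ 2 := by ring
          rw [h1, abs_sub_comm]
  have hJ1par : J1 ≤ parSemi q v := le_parSemi hA hD hsub v
  -- collect term 2
  have hT2total : ENNReal.ofReal (2 * T2) ≤ ENNReal.ofReal (2 * δ) * parSemi q v := by
    have c1 : 2 * T2 ≤ (2 * (volume Dl).toReal * (volume A).toReal⁻¹) *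
        ∫ s, ∫ t, (w t - w s) ^ 2 ∂μt ∂μt := by
      rw [hT2eq]
      have := mul_le_mul_of_nonneg_left hvar (by positivity :
        (0:ℝ) ≤ 2 * (volume Dl).toReal)
      calc 2 * ((volume Dl).toReal * ∫ t, (w t - mw) ^ 2 ∂μt)
          = 2 * (volume Dl).toReal * ∫ t, (w t - mw) ^ 2 ∂μt := by ring
        _ ≤ 2 * (volume Dl).toReal *
            ((volume A).toReal⁻¹ * ∫ s, ∫ t, (w t - w s) ^ 2 ∂μt ∂μt) := this
        _ = (2 * (volume Dl).toReal * (volume A).toReal⁻¹) *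
            ∫ s, ∫ t, (w t - w s) ^ 2 ∂μt ∂μt := by ring
    calc ENNReal.ofReal (2 * T2)
        ≤ ENNReal.ofReal ((2 * (volume Dl).toReal * (volume A).toReal⁻¹) *
            ∫ s, ∫ t, (w t - w s) ^ 2 ∂μt ∂μt) := ENNReal.ofReal_le_ofReal c1
      _ = ENNReal.ofReal (2 * (volume Dl).toReal * (volume A).toReal⁻¹) *
            ENNReal.ofReal (∫ s, ∫ t, (w t - w s) ^ 2 ∂μt ∂μt) :=
          ENNReal.ofReal_mul (by positivity)
      _ ≤ ENNReal.ofReal (2 * (volume Dl).toReal * (volume A).toReal⁻¹) *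
            (ENNReal.ofReal ((volume Dl).toReal⁻¹) *
              (ENNReal.ofReal (δ * (volume A).toReal) * J1)) := by
          refine mul_le_mul_right ?_ _
          refine le_trans hdl (le_trans hjen (le_trans hconst ?_))
          exact mul_le_mul_right hker _
      _ = ENNReal.ofReal (2 * δ) * J1 := by
          rw [← mul_assoc, ← ENNReal.ofReal_mul (by positivity), ← mul_assoc,
            ← ENNReal.ofReal_mul (by positivity)]
          congr 2
          field_simp
      _ ≤ ENNReal.ofReal (2 * δ) * parSemi q v := mul_le_mul_right hJ1par _
  -- collect term 1
  have hT1total : ENNReal.ofReal (2 * T1)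
      ≤ ENNReal.ofReal (2 * Kd) * ∫⁻ p in q, ENNReal.ofReal (g p.1 p.2 ^ 2) := by
    calc ENNReal.ofReal (2 * T1)
        ≤ ENNReal.ofReal (2 * Kd * ∫ p in A ×ˢ Dl, g p.1 p.2 ^ 2) := by
          refine ENNReal.ofReal_le_ofReal ?_
          nlinarith [hT1bound]
      _ = ENNReal.ofReal (2 * Kd) * ENNReal.ofReal (∫ p in A ×ˢ Dl, g p.1 p.2 ^ 2) := by
          rw [← ENNReal.ofReal_mul (by positivity), mul_assoc]
      _ ≤ ENNReal.ofReal (2 * Kd) * ∫⁻ p in q, ENNReal.ofReal (g p.1 p.2 ^ 2) :=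
          mul_le_mul_right hg_lint _
  -- final assembly
  calc ENNReal.ofReal (∫ p in A ×ˢ Dl,
        (v p.1 p.2 - smean volume (fun p : ℝ × (Fin d → ℝ) => v p.1 p.2) (A ×ˢ Dl)) ^ 2)
      ≤ ENNReal.ofReal (2 * T1 + 2 * T2) :=
        ENNReal.ofReal_le_ofReal (le_trans hstep1 hstep2)
    _ = ENNReal.ofReal (2 * T1) + ENNReal.ofReal (2 * T2) :=
        ENNReal.ofReal_add (by positivity) (by positivity)
    _ ≤ ENNReal.ofReal (2 * Kd) * (∫⁻ p in q, ENNReal.ofReal (g p.1 p.2 ^ 2))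
        + ENNReal.ofReal (2 * δ) * parSemi q v := add_le_add hT1total hT2total
end percyl

/-- Generalized parabolic Poincaré inequality (Lemma 4.4): for an area
`q = ⋃_{ℓ=0}^L I_ℓ × D_ℓ` covered by time-space cylinders satisfying the
overlap condition (4.6) with constant `κ`, and with the spatial Poincaré
inequality with constant `C_x diam(D_ℓ)` on each cylinder, every
`v ∈ L²(q)` satisfies, with `h_t`, `h_x` the temporal resp. spatial diameters
of `q`, `‖v − ⟨v⟩_q‖²_{L²(q)} ≤ C ( h_x² ‖g‖²_{L²(q)} + h_t |v|²_{H^{1/2}L²(q)} )`,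
where `C` depends only on `L`, `κ`, `C_x`. -/
theorem stmt_6 (L : ℕ) (κ Cx : ℝ) (hκ : 1 ≤ κ) (hCx : 0 < Cx) :
    ∃ C : ℝ, 0 < C ∧
      ∀ (d : ℕ) (I : ℕ → Set ℝ) (D : ℕ → Set (Fin d → ℝ)),
        (∀ ℓ ≤ L, Bornology.IsBounded (I ℓ) ∧ (I ℓ).OrdConnected ∧
          MeasurableSet (I ℓ)) →
        (∀ ℓ ≤ L, Bornology.IsBounded (D ℓ) ∧ MeasurableSet (D ℓ) ∧
          0 < volume (D ℓ)) →
        (∀ j, 1 ≤ j → j ≤ L →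
          0 < volume ((I j ×ˢ D j) ∩ ⋃ ℓ ∈ Finset.range j, I ℓ ×ˢ D ℓ) ∧
          volume (I j ×ˢ D j)
            ≤ ENNReal.ofReal κ *
                volume ((I j ×ˢ D j) ∩ ⋃ ℓ ∈ Finset.range j, I ℓ ×ˢ D ℓ)) →
        ∀ v g : ℝ → (Fin d → ℝ) → ℝ,
          MemLp (fun p : ℝ × (Fin d → ℝ) => v p.1 p.2) 2
            (volume.restrict (⋃ ℓ ∈ Finset.range (L + 1), I ℓ ×ˢ D ℓ)) →
          MemLp (fun p : ℝ × (Fin d → ℝ) => g p.1 p.2) 2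
            (volume.restrict (⋃ ℓ ∈ Finset.range (L + 1), I ℓ ×ˢ D ℓ)) →
          (∀ ℓ ≤ L, ∀ᵐ t ∂(volume.restrict (I ℓ)),
            (∫ x in D ℓ, (v t x - (volume (D ℓ)).toReal⁻¹ * ∫ y in D ℓ, v t y) ^ 2)
              ≤ (Cx * Metric.diam (D ℓ)) ^ 2 * ∫ x in D ℓ, g t x ^ 2) →
          (∫⁻ p in ⋃ ℓ ∈ Finset.range (L + 1), I ℓ ×ˢ D ℓ,
              ENNReal.ofReal
                ((v p.1 p.2 - parMean (⋃ ℓ ∈ Finset.range (L + 1), I ℓ ×ˢ D ℓ) v) ^ 2))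
            ≤ ENNReal.ofReal C *
                (ENNReal.ofReal
                    (Metric.diam (Prod.snd '' ⋃ ℓ ∈ Finset.range (L + 1), I ℓ ×ˢ D ℓ) ^ 2) *
                    (∫⁻ p in ⋃ ℓ ∈ Finset.range (L + 1), I ℓ ×ˢ D ℓ,
                      ENNReal.ofReal (g p.1 p.2 ^ 2))
                  + ENNReal.ofReal
                      (Metric.diam (Prod.fst '' ⋃ ℓ ∈ Finset.range (L + 1), I ℓ ×ˢ D ℓ)) *
                      parSemi (⋃ ℓ ∈ Finset.range (L + 1), I ℓ ×ˢ D ℓ) v) := by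
  classical
  have hbase : (1:ℝ) ≤ 2 + 4 * κ := by linarith
  have hbasepos : (0:ℝ) < 2 + 4 * κ := by linarith
  refine ⟨(2 + 4 * κ) ^ (L + 1) * (L + 1 : ℕ) * (2 * Cx ^ 2 + 2), by positivity, ?_⟩
  intro d I D hI hD hov v g hv hg hPoin
  set f : ℝ × (Fin d → ℝ) → ℝ := fun p => v p.1 p.2 with hfdef
  set Q : Set (ℝ × (Fin d → ℝ)) := ⋃ ℓ ∈ Finset.range (L + 1), I ℓ ×ˢ D ℓ with hQdef
  have hsubQ : ∀ ℓ ≤ L, I ℓ ×ˢ D ℓ ⊆ Q := by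
    intro ℓ hℓ p hp
    exact mem_biUnion (Finset.mem_range.2 (Nat.lt_succ_of_le hℓ)) hp
  have hQbdd : Bornology.IsBounded Q := by
    refine (Bornology.isBounded_biUnion (Finset.range (L + 1)).finite_toSet).2
      fun ℓ hℓ => ?_
    have hℓL : ℓ ≤ L := Nat.lt_succ_iff.1 (Finset.mem_range.1 hℓ)
    exact ((hI ℓ hℓL).1).prod ((hD ℓ hℓL).1)
  have hQfin : volume Q ≠ ∞ := hQbdd.measure_lt_top.ne
  haveI : IsFiniteMeasure (volume.restrict Q) :=
    ⟨by rw [Measure.restrict_apply_univ]; exact hQfin.lt_top⟩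
  -- trivial case
  by_cases hQ0 : volume Q = 0
  · rw [Measure.restrict_eq_zero.mpr hQ0, lintegral_zero_measure]
    exact zero_le
  -- volumes of cylinders
  have hvolprod : ∀ ℓ, volume (I ℓ ×ˢ D ℓ) = volume (I ℓ) * volume (D ℓ) := fun ℓ => by
    rw [Measure.volume_eq_prod, Measure.prod_prod]
  have hql0 : ∀ ℓ ≤ L, volume (I ℓ ×ˢ D ℓ) ≠ 0 := by
    intro ℓ hℓ
    rcases Nat.eq_zero_or_pos ℓ with rfl | hℓ1
    · -- ℓ = 0
      rcases Nat.eq_zero_or_pos L with hL0 | hL1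
      · intro h
        apply hQ0
        rw [hQdef, hL0]
        simpa [Finset.range_one, Finset.set_biUnion_singleton] using h
      · intro h
        have h1 := (hov 1 le_rfl hL1).1
        have h2 : ((I 1 ×ˢ D 1) ∩ ⋃ ℓ ∈ Finset.range 1, I ℓ ×ˢ D ℓ) ⊆ I 0 ×ˢ D 0 := by
          rw [Finset.range_one, Finset.set_biUnion_singleton]
          exact inter_subset_right
        have := measure_mono (μ := (volume : Measure (ℝ × (Fin d → ℝ)))) h2
        rw [h] at this
        exact absurd (le_antisymm this (zero_le)) h1.ne'
    · intro h
      have h1 := (hov ℓ hℓ1 hℓ).1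
      have h2 := measure_mono (μ := (volume : Measure (ℝ × (Fin d → ℝ))))
        (inter_subset_left (s := I ℓ ×ˢ D ℓ) (t := ⋃ i ∈ Finset.range ℓ, I i ×ˢ D i))
      rw [h] at h2
      exact absurd (le_antisymm h2 (zero_le)) h1.ne'
  have hI0 : ∀ ℓ ≤ L, volume (I ℓ) ≠ 0 := by
    intro ℓ hℓ h
    exact hql0 ℓ hℓ (by rw [hvolprod, h, zero_mul])
  have hIfin : ∀ ℓ ≤ L, volume (I ℓ) ≠ ∞ := fun ℓ hℓ => ((hI ℓ hℓ).1).measure_lt_top.ne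
  have hDfin : ∀ ℓ ≤ L, volume (D ℓ) ≠ ∞ := fun ℓ hℓ => ((hD ℓ hℓ).1).measure_lt_top.ne
  -- integrability on Q
  have hfQ : IntegrableOn f Q volume := hv.integrable one_le_two
  have hf2Q : IntegrableOn (fun p => f p ^ 2) Q volume := hv.integrable_sq
  -- the induction
  have hsum_nonneg : ∀ (s : Finset ℕ), (0:ℝ) ≤
      ∑ ℓ ∈ s, ∫ p in I ℓ ×ˢ D ℓ, (f p - smean volume f (I ℓ ×ˢ D ℓ)) ^ 2 :=
    fun s => Finset.sum_nonneg fun ℓ _ => integral_nonneg fun p => sq_nonneg _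
  have key : ∀ j, j ≤ L →
      (∫ p in (⋃ ℓ ∈ Finset.range (j + 1), I ℓ ×ˢ D ℓ),
        (f p - smean volume f (⋃ ℓ ∈ Finset.range (j + 1), I ℓ ×ˢ D ℓ)) ^ 2)
      ≤ (2 + 4 * κ) ^ (j + 1) *
        ∑ ℓ ∈ Finset.range (j + 1),
          ∫ p in I ℓ ×ˢ D ℓ, (f p - smean volume f (I ℓ ×ˢ D ℓ)) ^ 2 := by
    intro j
    induction j with
    | zero =>
      intro _
      simp only [Nat.zero_add, Finset.range_one, Finset.sum_singleton,
        Finset.set_biUnion_singleton, pow_one]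
      have hE0 : (0:ℝ) ≤ ∫ p in I 0 ×ˢ D 0, (f p - smean volume f (I 0 ×ˢ D 0)) ^ 2 :=
        integral_nonneg fun p => sq_nonneg _
      nlinarith
    | succ n ih =>
      intro hn
      have hnL : n ≤ L := Nat.le_of_succ_le hn
      have ihn := ih hnL
      have hunion : (⋃ ℓ ∈ Finset.range (n + 1 + 1), I ℓ ×ˢ D ℓ)
          = (⋃ ℓ ∈ Finset.range (n + 1), I ℓ ×ˢ D ℓ) ∪ (I (n+1) ×ˢ D (n+1)) := by
        rw [Finset.range_add_one, Finset.set_biUnion_insert, union_comm]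
      set S : Set (ℝ × (Fin d → ℝ)) := ⋃ ℓ ∈ Finset.range (n + 1), I ℓ ×ˢ D ℓ with hSdef
      set T : Set (ℝ × (Fin d → ℝ)) := I (n+1) ×ˢ D (n+1) with hTdef
      have hSsubQ : S ⊆ Q := by
        rw [hSdef, hQdef]
        refine iUnion₂_subset fun ℓ hℓ => ?_
        intro p hp
        refine mem_biUnion (Finset.mem_range.2 ?_) hp
        have := Finset.mem_range.1 hℓ
        omega
      have hTsubQ : T ⊆ Q := hsubQ (n+1) hn
      have hSmeas : MeasurableSet S := by
        refine MeasurableSet.biUnion (Finset.range (n+1)).countable_toSet fun ℓ hℓ => ?_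
        have hℓL : ℓ ≤ L := le_trans (Nat.lt_succ_iff.1 (Finset.mem_range.1 hℓ)) hnL
        exact ((hI ℓ hℓL).2.2).prod (hD ℓ hℓL).2.1
      have hTmeas : MeasurableSet T :=
        ((hI (n+1) hn).2.2).prod (hD (n+1) hn).2.1
      have hSfin : volume S ≠ ∞ := fun h => hQfin (top_unique (h ▸ measure_mono hSsubQ))
      have hTfin : volume T ≠ ∞ := fun h => hQfin (top_unique (h ▸ measure_mono hTsubQ))
      have hS0 : volume S ≠ 0 := by
        intro h
        have hsub0 : I 0 ×ˢ D 0 ⊆ S := fun p hp =>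
          mem_biUnion (Finset.mem_range.2 (Nat.succ_pos n)) hp
        have := measure_mono (μ := (volume : Measure (ℝ × (Fin d → ℝ)))) hsub0
        rw [h] at this
        exact hql0 0 (Nat.zero_le L) (le_antisymm this (zero_le))
      have hovn := hov (n+1) (Nat.succ_le_succ (Nat.zero_le n)) hn
      have hP0 : volume (T ∩ S) ≠ 0 := hovn.1.ne'
      have hκT : volume T ≤ ENNReal.ofReal κ * volume (T ∩ S) := hovn.2
      have hfST : IntegrableOn f (S ∪ T) volume := by
        refine hfQ.mono_set (union_subset hSsubQ hTsubQ)
      have hf2ST : IntegrableOn (fun p => f p ^ 2) (S ∪ T) volume :=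
        hf2Q.mono_set (union_subset hSsubQ hTsubQ)
      rw [hunion]
      refine le_trans (chain_step hκ hSmeas hTmeas hSfin hTfin hS0 hP0 hκT hfST hf2ST) ?_
      rw [Finset.sum_range_succ]
      have hET : (0:ℝ) ≤ ∫ p in T, (f p - smean volume f T) ^ 2 :=
        integral_nonneg fun p => sq_nonneg _
      have hSig := hsum_nonneg (Finset.range (n+1))
      have hpow1 : (1:ℝ) ≤ (2 + 4 * κ) ^ (n + 1) := one_le_pow₀ hbase
      have hES' := integral_nonneg (μ := volume.restrict S)
        (f := fun p => (f p - smean volume f S) ^ 2) fun p => sq_nonneg _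
      have e1 : (1 + 4 * κ) * (∫ p in S, (f p - smean volume f S) ^ 2)
          ≤ (1 + 4 * κ) * ((2 + 4 * κ) ^ (n + 1) *
            ∑ ℓ ∈ Finset.range (n + 1),
              ∫ p in I ℓ ×ˢ D ℓ, (f p - smean volume f (I ℓ ×ˢ D ℓ)) ^ 2) :=
        mul_le_mul_of_nonneg_left ihn (by linarith)
      rw [pow_succ]
      nlinarith [mul_nonneg (mul_nonneg hbasepos.le (pow_nonneg hbasepos.le (n+1))) hET,
        mul_nonneg (pow_nonneg hbasepos.le (n+1)) hSig,
        mul_le_mul_of_nonneg_right hpow1 (mul_nonneg hbasepos.le hET)]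
  have keyL := key L le_rfl
  -- per-cylinder estimates
  set ht : ℝ := Metric.diam (Prod.fst '' Q) with htdef
  set hx : ℝ := Metric.diam (Prod.snd '' Q) with hxdef
  set G : ℝ≥0∞ := ∫⁻ p in Q, ENNReal.ofReal (g p.1 p.2 ^ 2) with hGdef
  set P : ℝ≥0∞ := parSemi Q v with hPdef
  have hht0 : 0 ≤ ht := Metric.diam_nonneg
  have hhx0 : 0 ≤ hx := Metric.diam_nonneg
  have percylbound : ∀ ℓ ≤ L,
      ENNReal.ofReal (∫ p in I ℓ ×ˢ D ℓ,
          (f p - smean volume f (I ℓ ×ˢ D ℓ)) ^ 2)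
        ≤ ENNReal.ofReal (2 * Cx ^ 2 + 2) *
            (ENNReal.ofReal (hx ^ 2) * G + ENNReal.ofReal ht * P) := by
    intro ℓ hℓ
    have hDl0 : volume (D ℓ) ≠ 0 := (hD ℓ hℓ).2.2.ne'
    have hIl0 : volume (I ℓ) ≠ 0 := hI0 ℓ hℓ
    have hDne : (D ℓ).Nonempty := nonempty_of_measure_ne_zero hDl0
    have hIne : (I ℓ).Nonempty := nonempty_of_measure_ne_zero hIl0
    have hIsub : I ℓ ⊆ Prod.fst '' Q := by
      intro t htI
      obtain ⟨x, hxD⟩ := hDne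
      exact ⟨(t, x), hsubQ ℓ hℓ (mk_mem_prod htI hxD), rfl⟩
    have hDsub : D ℓ ⊆ Prod.snd '' Q := by
      intro x hxD
      obtain ⟨t, htI⟩ := hIne
      exact ⟨(t, x), hsubQ ℓ hℓ (mk_mem_prod htI hxD), rfl⟩
    have hδ : ∀ t ∈ I ℓ, ∀ s ∈ I ℓ, |t - s| ≤ ht := by
      intro t htm s hsm
      rw [← Real.dist_eq]
      exact Metric.dist_le_diam_of_mem hQbdd.image_fst (hIsub htm) (hIsub hsm)
    have step := percyl (q := Q) ((hI ℓ hℓ).2.2) ((hD ℓ hℓ).2.1) (hsubQ ℓ hℓ)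
      (hIfin ℓ hℓ) hIl0 (hDfin ℓ hℓ) hDl0 ((hI ℓ hℓ).2.1) hht0 hδ
      (sq_nonneg (Cx * Metric.diam (D ℓ))) hv (hPoin ℓ hℓ) hg.integrable_sq
    refine le_trans step ?_
    have hdiam : Metric.diam (D ℓ) ≤ hx :=
      Metric.diam_mono hDsub hQbdd.image_snd
    have hc1 : ENNReal.ofReal (2 * (Cx * Metric.diam (D ℓ)) ^ 2) * G
        ≤ ENNReal.ofReal (2 * Cx ^ 2 + 2) * (ENNReal.ofReal (hx ^ 2) * G) := by
      rw [← mul_assoc, ← ENNReal.ofReal_mul (by positivity)]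
      refine mul_le_mul_left (ENNReal.ofReal_le_ofReal ?_) _
      have h1 : Metric.diam (D ℓ) ^ 2 ≤ hx ^ 2 :=
        pow_le_pow_left₀ Metric.diam_nonneg hdiam 2
      nlinarith [sq_nonneg Cx, Metric.diam_nonneg (s := D ℓ), sq_nonneg hx]
    have hc2 : ENNReal.ofReal (2 * ht) * P
        ≤ ENNReal.ofReal (2 * Cx ^ 2 + 2) * (ENNReal.ofReal ht * P) := by
      rw [← mul_assoc, ← ENNReal.ofReal_mul (by positivity)]
      refine mul_le_mul_left (ENNReal.ofReal_le_ofReal ?_) _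
      nlinarith [sq_nonneg Cx]
    calc ENNReal.ofReal (2 * (Cx * Metric.diam (D ℓ)) ^ 2) * G
          + ENNReal.ofReal (2 * ht) * P
        ≤ ENNReal.ofReal (2 * Cx ^ 2 + 2) * (ENNReal.ofReal (hx ^ 2) * G)
          + ENNReal.ofReal (2 * Cx ^ 2 + 2) * (ENNReal.ofReal ht * P) :=
          add_le_add hc1 hc2
      _ = ENNReal.ofReal (2 * Cx ^ 2 + 2) *
            (ENNReal.ofReal (hx ^ 2) * G + ENNReal.ofReal ht * P) := by
          rw [mul_add]
  -- put everything together
  have hmean : parMean Q v = smean volume f Q := rfl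
  have hLHS : (∫⁻ p in Q, ENNReal.ofReal ((v p.1 p.2 - parMean Q v) ^ 2))
      = ENNReal.ofReal (∫ p in Q, (f p - smean volume f Q) ^ 2) := by
    rw [hmean]
    exact (ofReal_integral_eq_lintegral_ofReal
      ((hv.sub (memLp_const _)).integrable_sq)
      (Filter.Eventually.of_forall fun p => sq_nonneg _)).symm
  rw [hLHS]
  calc ENNReal.ofReal (∫ p in Q, (f p - smean volume f Q) ^ 2)
      ≤ ENNReal.ofReal ((2 + 4 * κ) ^ (L + 1) *
          ∑ ℓ ∈ Finset.range (L + 1),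
            ∫ p in I ℓ ×ˢ D ℓ, (f p - smean volume f (I ℓ ×ˢ D ℓ)) ^ 2) :=
        ENNReal.ofReal_le_ofReal keyL
    _ = ENNReal.ofReal ((2 + 4 * κ) ^ (L + 1)) *
          ENNReal.ofReal (∑ ℓ ∈ Finset.range (L + 1),
            ∫ p in I ℓ ×ˢ D ℓ, (f p - smean volume f (I ℓ ×ˢ D ℓ)) ^ 2) :=
        ENNReal.ofReal_mul (by positivity)
    _ ≤ ENNReal.ofReal ((2 + 4 * κ) ^ (L + 1)) *
          ∑ ℓ ∈ Finset.range (L + 1), ENNReal.ofReal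
            (∫ p in I ℓ ×ˢ D ℓ, (f p - smean volume f (I ℓ ×ˢ D ℓ)) ^ 2) :=
        mul_le_mul_right (le_of_eq (ENNReal.ofReal_sum_of_nonneg
          fun ℓ _ => integral_nonneg fun p => sq_nonneg _)) _
    _ ≤ ENNReal.ofReal ((2 + 4 * κ) ^ (L + 1)) *
          ∑ ℓ ∈ Finset.range (L + 1), ENNReal.ofReal (2 * Cx ^ 2 + 2) *
            (ENNReal.ofReal (hx ^ 2) * G + ENNReal.ofReal ht * P) := by
        refine mul_le_mul_right (Finset.sum_le_sum fun ℓ hℓ => ?_) _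
        exact percylbound ℓ (Nat.lt_succ_iff.1 (Finset.mem_range.1 hℓ))
    _ = ENNReal.ofReal ((2 + 4 * κ) ^ (L + 1) * (L + 1 : ℕ) * (2 * Cx ^ 2 + 2)) *
          (ENNReal.ofReal (hx ^ 2) * G + ENNReal.ofReal ht * P) := by
        rw [Finset.sum_const, Finset.card_range, nsmul_eq_mul,
          ENNReal.ofReal_mul (by positivity), ENNReal.ofReal_mul (by positivity)]
        rw [ENNReal.ofReal_natCast]
        ring
    _ ≤ ENNReal.ofReal ((2 + 4 * κ) ^ (L + 1) * (L + 1 : ℕ) * (2 * Cx ^ 2 + 2)) *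
          (ENNReal.ofReal (hx ^ 2) * G + ENNReal.ofReal ht * P) := le_rfl
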